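/- Let (Ω, 𝒜, P) be a probability space, 𝒢 ⊆ 𝒜 a sub-σ-algebra, h > 0, Y : Ω → ℝ square-integrable, and ΔW : Ω → ℝ^d with square-integrable components satisfying, almost surely, E[ΔWⁱ | 𝒢] = 0 and E[ΔWⁱ·ΔWʲ | 𝒢] = h if i = j and 0 otherwise (1 ≤ i, j ≤ d). Define Zⁱ := h⁻¹·E[Y·ΔWⁱ | 𝒢] for 1 ≤ i ≤ d. Then h·E[ Σ_{i=1}^d (Zⁱ)² ] ≤ E[ (Y − E[Y | 𝒢])² ]. -/

import Mathlib

open MeasureTheory Finset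

noncomputable section

section Helpers

variable {Ω : Type*} {m0 : MeasurableSpace Ω} {P : Measure Ω}

/-- Product of two L² functions is integrable. -/
lemma cpb_integrable_mul {f g : Ω → ℝ} (hf : MemLp f 2 P) (hg : MemLp g 2 P) :
    Integrable (fun ω => f ω * g ω) P := by
  refine (hf.integrable_sq.add hg.integrable_sq).mono'
    (hf.aestronglyMeasurable.mul hg.aestronglyMeasurable) ?_
  filter_upwards with ω
  simp only [Pi.add_apply, Real.norm_eq_abs, abs_mul]
  nlinarith [sq_nonneg (|f ω| - |g ω|), abs_nonneg (f ω), abs_nonneg (g ω),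
    sq_abs (f ω), sq_abs (g ω)]

/-- The conditional expectation of an L² function is L². -/
lemma cpb_memℒp_two_condexp {Ω' : Type*} {𝒢 m0' : MeasurableSpace Ω'} {P' : Measure Ω'}
    [IsProbabilityMeasure P'] (h𝒢 : 𝒢 ≤ m0')
    {f : Ω' → ℝ} (hf : MemLp f 2 P') : MemLp (P'[f|𝒢]) 2 P' := by
  set g : Lp ℝ 2 P' := ↑(condExpL2 ℝ ℝ h𝒢 (hf.toLp f)) with hg
  have hcond : (g : Ω' → ℝ) =ᵐ[P'] P'[f|𝒢] := by
    refine ae_eq_condExp_of_forall_setIntegral_eq h𝒢 (hf.integrable one_le_two)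
      (fun s _ _ => ((Lp.memLp g).integrable one_le_two).integrableOn)
      (fun s hs hμs => ?_) ?_
    · rw [hg, integral_condExpL2_eq h𝒢 (hf.toLp f) hs hμs.ne]
      exact setIntegral_congr_ae (h𝒢 s hs) ((hf.coeFn_toLp).mono fun x hx _ => hx)
    · exact aestronglyMeasurable_condExpL2 h𝒢 _
  exact (Lp.memLp g).ae_eq hcond

end Helpers

/-- truncation at level `N`. -/
def cpbTrunc (N x : ℝ) : ℝ := max (-N) (min N x)

lemma cpbTrunc_facts {N x : ℝ} (hN : 0 ≤ N) :
    (cpbTrunc N x)^2 ≤ (cpbTrunc N x) * x ∧ |cpbTrunc N x| ≤ N ∧ |cpbTrunc N x| ≤ |x| := by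
  unfold cpbTrunc
  rcases le_total 0 x with hx | hx
  · have h1 : max (-N) (min N x) = min N x := max_eq_right (by nlinarith [le_min hN hx])
    rw [h1]
    have h2 : 0 ≤ min N x := le_min hN hx
    have h3 : min N x ≤ x := min_le_right _ _
    have h4 : min N x ≤ N := min_le_left _ _
    refine ⟨by nlinarith, ?_, ?_⟩ <;> rw [abs_of_nonneg h2]
    · exact h4
    · rw [abs_of_nonneg hx]; exact h3
  · have h1 : min N x = x := min_eq_right (hx.trans hN)
    rw [h1]
    have h2 : max (-N) x ≤ 0 := max_le (by linarith) hx
    have h3 : x ≤ max (-N) x := le_max_right _ _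
    have h4 : -N ≤ max (-N) x := le_max_left _ _
    refine ⟨by nlinarith, ?_, ?_⟩ <;> rw [abs_of_nonpos h2]
    · linarith
    · rw [abs_of_nonpos hx]; linarith

lemma cpbTrunc_sq_mono {x : ℝ} {N M : ℝ} (hN : 0 ≤ N) (hNM : N ≤ M) :
    (cpbTrunc N x)^2 ≤ (cpbTrunc M x)^2 := by
  unfold cpbTrunc
  rcases le_total 0 x with hx | hx
  · have h1 : max (-N) (min N x) = min N x := max_eq_right (by nlinarith [le_min hN hx])
    have h1' : max (-M) (min M x) = min M x :=
      max_eq_right (by nlinarith [le_min (hN.trans hNM) hx])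
    rw [h1, h1']
    have h2 : 0 ≤ min N x := le_min hN hx
    have h3 : min N x ≤ min M x := min_le_min hNM le_rfl
    nlinarith
  · have h1 : min N x = x := min_eq_right (hx.trans hN)
    have h1' : min M x = x := min_eq_right (hx.trans (hN.trans hNM))
    rw [h1, h1']
    have h2 : max (-N) x ≤ 0 := max_le (by linarith) hx
    have h3 : max (-M) x ≤ max (-N) x := max_le_max (by linarith) le_rfl
    nlinarith

lemma cpbTrunc_eq_self {N x : ℝ} (hx : |x| ≤ N) : cpbTrunc N x = x := by
  rw [abs_le] at hx
  unfold cpbTrunc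
  rw [min_eq_right hx.2, max_eq_right hx.1]

/-- The discrete control process `Zⁱ = h⁻¹·E[Y·ΔWⁱ | 𝒢]` built from
increments with conditional mean zero and conditional covariance `h·I` satisfies
`h·E[|Z|²] ≤ E[(Y − E[Y|𝒢])²]`. -/
theorem control_process_bound
    {Ω : Type*} {m0 : MeasurableSpace Ω} (P : Measure Ω) [IsProbabilityMeasure P]
    (𝒢 : MeasurableSpace Ω) (h𝒢 : 𝒢 ≤ m0)
    (h : ℝ) (hh : 0 < h) (d : ℕ) (hd : 1 ≤ d)
    (Y : Ω → ℝ) (hY : MemLp Y 2 P)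
    (ΔW : Ω → Fin d → ℝ)
    (hΔW2 : ∀ i, MemLp (fun ω => ΔW ω i) 2 P)
    (hmean : ∀ i, P[(fun ω => ΔW ω i) | 𝒢] =ᵐ[P] 0)
    (hcov : ∀ i j, P[(fun ω => ΔW ω i * ΔW ω j) | 𝒢]
        =ᵐ[P] fun _ => if i = j then h else 0)
    (Z : Ω → Fin d → ℝ)
    (hZ : ∀ i, (fun ω => Z ω i)
        = fun ω => h⁻¹ * (P[(fun ω' => Y ω' * ΔW ω' i) | 𝒢]) ω) :
    h * ∫ ω, (∑ i, (Z ω i) ^ 2) ∂P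
      ≤ ∫ ω, (Y ω - (P[Y | 𝒢]) ω) ^ 2 ∂P := by
  -- setup
  have hEY2 : MemLp (P[Y|𝒢]) 2 P := cpb_memℒp_two_condexp h𝒢 hY
  set Yb : Ω → ℝ := fun ω => Y ω - (P[Y|𝒢]) ω with hYbdef
  have hYb2 : MemLp Yb 2 P := hY.sub hEY2
  have hYbsq_int : Integrable (fun ω => Yb ω ^ 2) P := hYb2.integrable_sq
  have hYbW_int : ∀ i, Integrable (fun ω => Yb ω * ΔW ω i) P :=
    fun i => cpb_integrable_mul hYb2 (hΔW2 i)
  have hWW_int : ∀ i j, Integrable (fun ω => ΔW ω i * ΔW ω j) P :=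
    fun i j => cpb_integrable_mul (hΔW2 i) (hΔW2 j)
  have hZmeas : ∀ i, StronglyMeasurable[𝒢] (fun ω => Z ω i) := by
    intro i; rw [hZ i]; exact stronglyMeasurable_condExp.const_mul _
  have hZint : ∀ i, Integrable (fun ω => Z ω i) P := by
    intro i; rw [hZ i]; exact integrable_condExp.const_mul _
  -- key identity : P[Yb·ΔWⁱ|𝒢] = h·Zᵢ a.e.
  have hZid : ∀ i, P[(fun ω => Yb ω * ΔW ω i)|𝒢] =ᵐ[P] fun ω => h * Z ω i := by
    intro i
    have hsplit : (fun ω => Yb ω * ΔW ω i)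
        = (fun ω => Y ω * ΔW ω i) - fun ω => (P[Y|𝒢]) ω * ΔW ω i := by
      funext ω; simp [hYbdef]; ring
    have hEYW_int : Integrable (fun ω => (P[Y|𝒢]) ω * ΔW ω i) P :=
      cpb_integrable_mul hEY2 (hΔW2 i)
    have hYW_int : Integrable (fun ω => Y ω * ΔW ω i) P :=
      cpb_integrable_mul hY (hΔW2 i)
    have h1 : P[(fun ω => Yb ω * ΔW ω i)|𝒢]
        =ᵐ[P] P[(fun ω => Y ω * ΔW ω i)|𝒢] - P[(fun ω => (P[Y|𝒢]) ω * ΔW ω i)|𝒢] := by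
      rw [hsplit]; exact condExp_sub hYW_int hEYW_int 𝒢
    have h2 : P[(fun ω => (P[Y|𝒢]) ω * ΔW ω i)|𝒢]
        =ᵐ[P] fun ω => (P[Y|𝒢]) ω * (P[(fun ω' => ΔW ω' i)|𝒢]) ω := by
      have := condExp_mul_of_stronglyMeasurable_left (μ := P) (m := 𝒢)
        (f := P[Y|𝒢]) (g := fun ω => ΔW ω i) stronglyMeasurable_condExp
        hEYW_int ((hΔW2 i).integrable one_le_two)
      exact this
    have h3 : (fun ω => (P[Y|𝒢]) ω * (P[(fun ω' => ΔW ω' i)|𝒢]) ω) =ᵐ[P] 0 := by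
      filter_upwards [hmean i] with ω hω
      simp [hω]
    have h4 : P[(fun ω => Y ω * ΔW ω i)|𝒢] = fun ω => h * Z ω i := by
      funext ω
      have := congrFun (hZ i) ω
      rw [this]; field_simp
    filter_upwards [h1, h2, h3] with ω hω1 hω2 hω3
    have : (P[(fun ω => (P[Y|𝒢]) ω * ΔW ω i)|𝒢]) ω = 0 := by
      rw [hω2]; exact hω3
    rw [hω1]
    simp only [Pi.sub_apply, this, sub_zero]
    exact congrFun h4 ω
  -- pull-out lemma for bounded 𝒢-measurable factors
  have key : ∀ (q X : Ω → ℝ), StronglyMeasurable[𝒢] q → (∃ C, ∀ ω, |q ω| ≤ C) →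
      Integrable X P →
      ∫ ω, q ω * X ω ∂P = ∫ ω, q ω * (P[X|𝒢]) ω ∂P := by
    intro q X hq hqb hX
    have hqm0 : AEStronglyMeasurable[m0] q P := (hq.mono h𝒢).aestronglyMeasurable
    have hqX : Integrable (fun ω => q ω * X ω) P :=
      hX.bdd_mul hqm0 (c := hqb.choose) (Filter.Eventually.of_forall fun ω => by simpa [Real.norm_eq_abs] using hqb.choose_spec ω)
    have h1 : P[(fun ω => q ω * X ω)|𝒢] =ᵐ[P] fun ω => q ω * (P[X|𝒢]) ω := by
      have := condExp_mul_of_stronglyMeasurable_left (μ := P) (m := 𝒢) hq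
        hqX hX
      exact this
    calc ∫ ω, q ω * X ω ∂P = ∫ ω, (P[(fun ω => q ω * X ω)|𝒢]) ω ∂P :=
          (integral_condExp h𝒢).symm
      _ = ∫ ω, q ω * (P[X|𝒢]) ω ∂P := integral_congr_ae h1
  -- Step A: the bound for truncations of Z
  have stepA : ∀ N : ℕ, h * ∑ i, ∫ ω, (cpbTrunc N (Z ω i)) ^ 2 ∂P ≤ ∫ ω, Yb ω ^ 2 ∂P := by
    intro N
    set q : Fin d → Ω → ℝ := fun i ω => cpbTrunc N (Z ω i) with hqdef
    have hNn : (0:ℝ) ≤ (N:ℝ) := Nat.cast_nonneg N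
    have hqb : ∀ i ω, |q i ω| ≤ (N:ℝ) := fun i ω => (cpbTrunc_facts hNn).2.1
    have hq_meas : ∀ i, StronglyMeasurable[𝒢] (q i) := by
      intro i
      have : q i = fun ω => max (-(N:ℝ)) (min (N:ℝ) (Z ω i)) := rfl
      rw [this]
      exact (measurable_const.max (measurable_const.min (hZmeas i).measurable)).stronglyMeasurable
    have hqq_meas : ∀ i j, StronglyMeasurable[𝒢] (fun ω => q i ω * q j ω) :=
      fun i j => (hq_meas i).mul (hq_meas j)
    have hqqb : ∀ i j ω, |q i ω * q j ω| ≤ (N:ℝ) * N := fun i j ω => by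
      rw [abs_mul]
      exact mul_le_mul (hqb i ω) (hqb j ω) (abs_nonneg _) hNn
    have hqZ_int : ∀ i, Integrable (fun ω => q i ω * Z ω i) P := fun i =>
      (hZint i).bdd_mul ((hq_meas i).mono h𝒢).aestronglyMeasurable
        (c := N) (Filter.Eventually.of_forall fun ω => by simpa [Real.norm_eq_abs] using hqb i ω)
    have hq_int : ∀ i, Integrable (q i) P := fun i =>
      (hZint i).abs.mono' ((hq_meas i).mono h𝒢).aestronglyMeasurable
        (Filter.Eventually.of_forall fun ω => by
          simpa [Real.norm_eq_abs] using (cpbTrunc_facts (x := Z ω i) hNn).2.2)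
    have hqsq_int : ∀ i, Integrable (fun ω => q i ω ^ 2) P := fun i => by
      have := (hq_int i).bdd_mul ((hq_meas i).mono h𝒢).aestronglyMeasurable
        (c := N) (Filter.Eventually.of_forall fun ω => by simpa [Real.norm_eq_abs] using hqb i ω)
      simpa [sq] using this
    -- the cross terms
    have hA : ∀ i, ∫ ω, q i ω * (Yb ω * ΔW ω i) ∂P = h * ∫ ω, q i ω * Z ω i ∂P := by
      intro i
      rw [key (q i) (fun ω => Yb ω * ΔW ω i) (hq_meas i) ⟨N, hqb i⟩ (hYbW_int i)]
      have h5 : ∫ ω, q i ω * (P[(fun ω' => Yb ω' * ΔW ω' i)|𝒢]) ω ∂P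
          = ∫ ω, h * (q i ω * Z ω i) ∂P :=
        integral_congr_ae (by filter_upwards [hZid i] with ω hω; rw [hω]; ring)
      rw [h5, integral_const_mul]
    have hB : ∀ i j, ∫ ω, (q i ω * q j ω) * (ΔW ω i * ΔW ω j) ∂P
        = if i = j then h * ∫ ω, q i ω ^ 2 ∂P else 0 := by
      intro i j
      rw [key (fun ω => q i ω * q j ω) (fun ω => ΔW ω i * ΔW ω j)
        (hqq_meas i j) ⟨(N:ℝ) * N, hqqb i j⟩ (hWW_int i j)]
      have h5 : ∫ ω, (q i ω * q j ω) * (P[(fun ω' => ΔW ω' i * ΔW ω' j)|𝒢]) ω ∂P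
          = ∫ ω, (q i ω * q j ω) * (if i = j then h else 0) ∂P :=
        integral_congr_ae (by filter_upwards [hcov i j] with ω hω; rw [hω])
      rw [h5]
      by_cases hij : i = j
      · subst hij
        rw [if_pos rfl]
        have h7 : ∫ ω, q i ω * q i ω * h ∂P = ∫ ω, h * q i ω ^ 2 ∂P :=
          integral_congr_ae (Filter.Eventually.of_forall fun ω => by ring)
        rw [h7, integral_const_mul, if_pos rfl]
      · simp [hij]
    -- integrability of the sums
    have hint1 : Integrable (fun ω => ∑ i, q i ω * (Yb ω * ΔW ω i)) P :=
      integrable_finset_sum _ fun i _ =>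
        (hYbW_int i).bdd_mul ((hq_meas i).mono h𝒢).aestronglyMeasurable
          (c := N) (Filter.Eventually.of_forall fun ω => by simpa [Real.norm_eq_abs] using hqb i ω)
    have hint2' : ∀ i j, Integrable (fun ω => (q i ω * q j ω) * (ΔW ω i * ΔW ω j)) P :=
      fun i j => (hWW_int i j).bdd_mul ((hqq_meas i j).mono h𝒢).aestronglyMeasurable
          (c := (N:ℝ) * N) (Filter.Eventually.of_forall fun ω => by rw [Real.norm_eq_abs]; exact hqqb i j ω)
    have hint2 : Integrable (fun ω => ∑ i, ∑ j, (q i ω * q j ω) * (ΔW ω i * ΔW ω j)) P :=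
      integrable_finset_sum _ fun i _ => integrable_finset_sum _ fun j _ => hint2' i j
    -- pointwise expansion of the square
    have heq : (fun ω => (Yb ω - ∑ i, q i ω * ΔW ω i) ^ 2)
        = fun ω => Yb ω ^ 2 - 2 * (∑ i, q i ω * (Yb ω * ΔW ω i))
            + ∑ i, ∑ j, (q i ω * q j ω) * (ΔW ω i * ΔW ω j) := by
      funext ω
      have h1 : (∑ i, q i ω * ΔW ω i) ^ 2
          = ∑ i, ∑ j, (q i ω * q j ω) * (ΔW ω i * ΔW ω j) := by
        rw [sq, Finset.sum_mul_sum]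
        exact Finset.sum_congr rfl fun i _ => Finset.sum_congr rfl fun j _ => by ring
      have h2 : Yb ω * ∑ i, q i ω * ΔW ω i = ∑ i, q i ω * (Yb ω * ΔW ω i) := by
        rw [Finset.mul_sum]
        exact Finset.sum_congr rfl fun i _ => by ring
      linear_combination h1 - 2 * h2
    have hnonneg : (0:ℝ) ≤ ∫ ω, (Yb ω - ∑ i, q i ω * ΔW ω i) ^ 2 ∂P :=
      integral_nonneg fun ω => sq_nonneg _
    have hsplit2 : ∫ ω, (Yb ω - ∑ i, q i ω * ΔW ω i) ^ 2 ∂P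
        = ∫ ω, Yb ω ^ 2 ∂P - 2 * (∑ i, ∫ ω, q i ω * (Yb ω * ΔW ω i) ∂P)
          + ∑ i, ∑ j, ∫ ω, (q i ω * q j ω) * (ΔW ω i * ΔW ω j) ∂P := by
      have hsubint : Integrable (fun ω => Yb ω ^ 2 - 2 * ∑ i, q i ω * (Yb ω * ΔW ω i)) P :=
        hYbsq_int.sub (hint1.const_mul 2)
      rw [heq, integral_add hsubint hint2,
        integral_sub hYbsq_int (hint1.const_mul 2), integral_const_mul,
        integral_finset_sum _ (fun i _ => (hYbW_int i).bdd_mul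
          ((hq_meas i).mono h𝒢).aestronglyMeasurable
          (c := N) (Filter.Eventually.of_forall fun ω => by simpa [Real.norm_eq_abs] using hqb i ω)),
        integral_finset_sum _ (fun i _ => integrable_finset_sum _ fun j _ => hint2' i j)]
      congr 1
      exact Finset.sum_congr rfl fun i _ => integral_finset_sum _ fun j _ => hint2' i j
    have hBsum : ∑ i, ∑ j, ∫ ω, (q i ω * q j ω) * (ΔW ω i * ΔW ω j) ∂P
        = h * ∑ i, ∫ ω, q i ω ^ 2 ∂P := by
      rw [Finset.mul_sum]
      refine Finset.sum_congr rfl fun i _ => ?_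
      rw [Finset.sum_congr rfl fun j _ => hB i j]
      simp
    have hAsum : ∑ i, ∫ ω, q i ω * (Yb ω * ΔW ω i) ∂P
        = h * ∑ i, ∫ ω, q i ω * Z ω i ∂P := by
      rw [Finset.mul_sum]
      exact Finset.sum_congr rfl fun i _ => hA i
    have hsum_mono : ∑ i, ∫ ω, q i ω ^ 2 ∂P ≤ ∑ i, ∫ ω, q i ω * Z ω i ∂P :=
      Finset.sum_le_sum fun i _ => integral_mono (hqsq_int i) (hqZ_int i)
        (fun ω => (cpbTrunc_facts (x := Z ω i) hNn).1)
    have hfinal := hnonneg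
    rw [hsplit2, hAsum, hBsum] at hfinal
    have hmul : h * ∑ i, ∫ ω, q i ω ^ 2 ∂P ≤ h * ∑ i, ∫ ω, q i ω * Z ω i ∂P :=
      mul_le_mul_of_nonneg_left hsum_mono hh.le
    linarith
  -- Step B: monotone convergence to remove the truncation
  set B := ∫ ω, Yb ω ^ 2 ∂P with hBdef
  have hBnn : 0 ≤ B := integral_nonneg fun ω => sq_nonneg _
  have hZm0 : ∀ i, Measurable[m0] (fun ω => Z ω i) := fun i => ((hZmeas i).mono h𝒢).measurable
  have mq : ∀ (N : ℕ) (i : Fin d), Measurable[m0] (fun ω => cpbTrunc N (Z ω i)) := fun N i =>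
    measurable_const.max (measurable_const.min (hZm0 i))
  have hmeasT : ∀ (N : ℕ) (i : Fin d),
      Measurable[m0] (fun ω => ENNReal.ofReal ((cpbTrunc N (Z ω i)) ^ 2)) := fun N i =>
    ENNReal.measurable_ofReal.comp ((mq N i).pow_const 2)
  have hsqmono : ∀ (i : Fin d) ⦃N M : ℕ⦄, N ≤ M → ∀ ω,
      ENNReal.ofReal ((cpbTrunc N (Z ω i)) ^ 2) ≤ ENNReal.ofReal ((cpbTrunc M (Z ω i)) ^ 2) :=
    fun i N M hNM ω => ENNReal.ofReal_le_ofReal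
      (cpbTrunc_sq_mono (Nat.cast_nonneg N) (Nat.cast_le.2 hNM))
  have hlintS : ∀ i, ∫⁻ ω, ENNReal.ofReal ((Z ω i) ^ 2) ∂P
      = ⨆ N : ℕ, ∫⁻ ω, ENNReal.ofReal ((cpbTrunc N (Z ω i)) ^ 2) ∂P := by
    intro i
    rw [← lintegral_iSup (fun N => hmeasT N i) (fun N M hNM ω => hsqmono i hNM ω)]
    refine lintegral_congr fun ω => ?_
    apply le_antisymm
    · refine le_iSup_of_le ⌈|Z ω i|⌉₊ ?_
      rw [cpbTrunc_eq_self (Nat.le_ceil _)]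
    · refine iSup_le fun N => ENNReal.ofReal_le_ofReal ?_
      have h1 := (cpbTrunc_facts (N := (N:ℝ)) (x := Z ω i) (Nat.cast_nonneg N)).2.2
      nlinarith [abs_nonneg (cpbTrunc N (Z ω i)), sq_abs (cpbTrunc N (Z ω i)),
        sq_abs (Z ω i), abs_nonneg (Z ω i)]
  have hT_eq : ∀ (N : ℕ) (i : Fin d), ∫ ω, (cpbTrunc N (Z ω i)) ^ 2 ∂P
      = (∫⁻ ω, ENNReal.ofReal ((cpbTrunc N (Z ω i)) ^ 2) ∂P).toReal := fun N i =>
    integral_eq_lintegral_of_nonneg_ae (Filter.Eventually.of_forall fun ω => sq_nonneg _)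
      ((mq N i).pow_const 2).aestronglyMeasurable
  have hT_fin : ∀ (N : ℕ) (i : Fin d),
      ∫⁻ ω, ENNReal.ofReal ((cpbTrunc N (Z ω i)) ^ 2) ∂P ≠ ⊤ := by
    intro N i
    have hb : ∀ ω, ENNReal.ofReal ((cpbTrunc N (Z ω i)) ^ 2) ≤ ENNReal.ofReal ((N:ℝ) ^ 2) :=
      fun ω => ENNReal.ofReal_le_ofReal (by
        have h1 := (cpbTrunc_facts (N := (N:ℝ)) (x := Z ω i) (Nat.cast_nonneg N)).2.1
        nlinarith [abs_nonneg (cpbTrunc N (Z ω i)), sq_abs (cpbTrunc N (Z ω i)),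
          Nat.cast_nonneg (α := ℝ) N])
    have : ∫⁻ ω, ENNReal.ofReal ((cpbTrunc N (Z ω i)) ^ 2) ∂P
        ≤ ENNReal.ofReal ((N:ℝ) ^ 2) := by
      calc ∫⁻ ω, ENNReal.ofReal ((cpbTrunc N (Z ω i)) ^ 2) ∂P
          ≤ ∫⁻ _, ENNReal.ofReal ((N:ℝ) ^ 2) ∂P := lintegral_mono hb
        _ = ENNReal.ofReal ((N:ℝ) ^ 2) := by simp
    exact ne_top_of_le_ne_top ENNReal.ofReal_ne_top this
  have hsumbound : ∀ N : ℕ,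
      ∑ i, ∫⁻ ω, ENNReal.ofReal ((cpbTrunc N (Z ω i)) ^ 2) ∂P ≤ ENNReal.ofReal (B / h) := by
    intro N
    have h1 : ∑ i, ∫ ω, (cpbTrunc N (Z ω i)) ^ 2 ∂P ≤ B / h := by
      rw [le_div_iff₀ hh]
      have := stepA N
      linarith
    rw [ENNReal.le_ofReal_iff_toReal_le (by
        exact (ENNReal.sum_lt_top.2 fun i _ => (hT_fin N i).lt_top).ne)
      (div_nonneg hBnn hh.le)]
    rw [ENNReal.toReal_sum (fun i _ => hT_fin N i)]
    calc ∑ i, (∫⁻ ω, ENNReal.ofReal ((cpbTrunc N (Z ω i)) ^ 2) ∂P).toReal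
        = ∑ i, ∫ ω, (cpbTrunc N (Z ω i)) ^ 2 ∂P :=
          Finset.sum_congr rfl fun i _ => (hT_eq N i).symm
      _ ≤ B / h := h1
  have hZbound : ∑ i, ∫⁻ ω, ENNReal.ofReal ((Z ω i) ^ 2) ∂P ≤ ENNReal.ofReal (B / h) := by
    calc ∑ i, ∫⁻ ω, ENNReal.ofReal ((Z ω i) ^ 2) ∂P
        = ∑ i, ⨆ N : ℕ, ∫⁻ ω, ENNReal.ofReal ((cpbTrunc N (Z ω i)) ^ 2) ∂P :=
          Finset.sum_congr rfl fun i _ => hlintS i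
      _ = ⨆ N : ℕ, ∑ i, ∫⁻ ω, ENNReal.ofReal ((cpbTrunc N (Z ω i)) ^ 2) ∂P :=
          ENNReal.finsetSum_iSup_of_monotone
            (fun i N M hNM => lintegral_mono fun ω => hsqmono i hNM ω)
      _ ≤ ENNReal.ofReal (B / h) := iSup_le hsumbound
  have hsum_meas : AEStronglyMeasurable[m0] (fun ω => ∑ i, (Z ω i) ^ 2) P :=
    (Measurable.aestronglyMeasurable (Finset.measurable_sum (m := m0) _ fun i _ => (hZm0 i).pow_const 2))
  have hlZ : ∫⁻ ω, ENNReal.ofReal (∑ i, (Z ω i) ^ 2) ∂P ≤ ENNReal.ofReal (B / h) := by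
    have hpt : ∀ ω, ENNReal.ofReal (∑ i, (Z ω i) ^ 2) = ∑ i, ENNReal.ofReal ((Z ω i) ^ 2) :=
      fun ω => ENNReal.ofReal_sum_of_nonneg fun i _ => sq_nonneg _
    have mZsq : ∀ i : Fin d, Measurable[m0] fun ω => ENNReal.ofReal (Z ω i ^ 2) :=
      fun i => ENNReal.measurable_ofReal.comp ((hZm0 i).pow_const 2)
    rw [lintegral_congr hpt, lintegral_finset_sum _ (fun i _ => mZsq i)]
    exact hZbound
  have hIeq : ∫ ω, (∑ i, (Z ω i) ^ 2) ∂P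
      = (∫⁻ ω, ENNReal.ofReal (∑ i, (Z ω i) ^ 2) ∂P).toReal :=
    integral_eq_lintegral_of_nonneg_ae
      (Filter.Eventually.of_forall fun ω => Finset.sum_nonneg fun i _ => sq_nonneg _) hsum_meas
  have hIle : ∫ ω, (∑ i, (Z ω i) ^ 2) ∂P ≤ B / h := by
    rw [hIeq]
    exact ENNReal.toReal_le_of_le_ofReal (div_nonneg hBnn hh.le) hlZ
  calc h * ∫ ω, (∑ i, (Z ω i) ^ 2) ∂P ≤ h * (B / h) := mul_le_mul_of_nonneg_left hIle hh.le
    _ = B := by field_simp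

end
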